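/- Let R be a compact Hausdorff topological semiring and M a topological semimodule over R (with continuous addition and continuous scalar action). Then M is profinite if and only if M is a totally disconnected compact Hausdorff space. -/

import Mathlib

lemma box_lemma (K : Type) [TopologicalSpace K] [CompactSpace K]
    (M : Type) [TopologicalSpace M] [CompactSpace M] [T2Space M]
    [TotallyDisconnectedSpace M] (W : Set (K × M)) (hW : IsClopen W) :
    ∃ (ι : Type) (_ : Finite ι) (B : ι → Set M), (∀ i, IsClopen (B i)) ∧
      ∀ x y : M, (∀ i, x ∈ B i ↔ y ∈ B i) → ∀ k : K, ((k, x) ∈ W ↔ (k, y) ∈ W) := by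
  have hbox : ∀ p : K × M, ∃ A : Set K, ∃ B : Set M, IsOpen A ∧ IsClopen B ∧
      p.1 ∈ A ∧ p.2 ∈ B ∧ (A ×ˢ B ⊆ W ∨ A ×ˢ B ⊆ Wᶜ) := by
    intro p
    by_cases hp : p ∈ W
    · obtain ⟨u, v, hu, hv, h1, h2, hsub⟩ := isOpen_prod_iff.mp hW.2 p.1 p.2 hp
      obtain ⟨B, hB, hpB, hBv⟩ :=
        isTopologicalBasis_isClopen.exists_subset_of_mem_open h2 hv
      exact ⟨u, B, hu, hB, h1, hpB, Or.inl (fun q hq => hsub ⟨hq.1, hBv hq.2⟩)⟩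
    · obtain ⟨u, v, hu, hv, h1, h2, hsub⟩ :=
        isOpen_prod_iff.mp hW.1.isOpen_compl p.1 p.2 hp
      obtain ⟨B, hB, hpB, hBv⟩ :=
        isTopologicalBasis_isClopen.exists_subset_of_mem_open h2 hv
      exact ⟨u, B, hu, hB, h1, hpB, Or.inr (fun q hq => hsub ⟨hq.1, hBv hq.2⟩)⟩
  choose A B hA hB hpA hpB hor using hbox
  have hcov : (Set.univ : Set (K × M)) ⊆ ⋃ p, A p ×ˢ B p := by
    intro p _
    exact Set.mem_iUnion.mpr ⟨p, hpA p, hpB p⟩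
  obtain ⟨t, ht⟩ := isCompact_univ.elim_finite_subcover (fun p => A p ×ˢ B p)
    (fun p => (hA p).prod (hB p).2) hcov
  refine ⟨t, inferInstance, fun i => B i, fun i => hB i, ?_⟩
  have key : ∀ x y : M, (∀ i : t, x ∈ B i ↔ y ∈ B i) → ∀ k : K,
      (k, x) ∈ W → (k, y) ∈ W := by
    intro x y hxy k hkx
    obtain ⟨p, hpt, hkp⟩ := Set.mem_iUnion₂.mp (ht (Set.mem_univ (k, x)))
    have hsub : A p ×ˢ B p ⊆ W := by
      rcases hor p with h | h
      · exact h
      · exact absurd (h hkp) (by simpa using hkx)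
    exact hsub ⟨hkp.1, (hxy ⟨p, hpt⟩).mp hkp.2⟩
  intro x y hxy k
  exact ⟨key x y hxy k, key y x (fun i => (hxy i).symm) k⟩

theorem statement14 (R : Type) [tR : TopologicalSpace R] [CompactSpace R] [T2Space R]
    (addR : R → R → R) (mulR : R → R → R)
    (haddA : ∀ x y z : R, addR (addR x y) z = addR x (addR y z))
    (haddC : ∀ x y : R, addR x y = addR y x)
    (hmulA : ∀ x y z : R, mulR (mulR x y) z = mulR x (mulR y z))
    (hdl : ∀ x y z : R, mulR x (addR y z) = addR (mulR x y) (mulR x z))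
    (hdr : ∀ x y z : R, mulR (addR x y) z = addR (mulR x z) (mulR y z))
    (hcaR : Continuous fun p : R × R => addR p.1 p.2)
    (hcmR : Continuous fun p : R × R => mulR p.1 p.2)
    (M : Type) [tM : TopologicalSpace M]
    (addM : M → M → M) (T : R → M → M)
    (haM : ∀ x y z : M, addM (addM x y) z = addM x (addM y z))
    (hcM : ∀ x y : M, addM x y = addM y x)
    (hT1 : ∀ (r : R) (x y : M), T r (addM x y) = addM (T r x) (T r y))
    (hT2 : ∀ (r s : R) (x : M), T (addR r s) x = addM (T r x) (T s x))
    (hT3 : ∀ (r s : R) (x : M), T (mulR r s) x = T r (T s x))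
    (hcaM : Continuous fun p : M × M => addM p.1 p.2)
    (hcT : Continuous fun p : R × M => T p.1 p.2) :
    (CompactSpace M ∧ ∀ x y : M, x ≠ y →
        ∃ (N : Type) (addN : N → N → N) (S : R → N → N) (φ : M → N),
          Finite N ∧
          (∀ x y z : N, addN (addN x y) z = addN x (addN y z)) ∧
          (∀ x y : N, addN x y = addN y x) ∧
          (∀ (r : R) (x y : N), S r (addN x y) = addN (S r x) (S r y)) ∧
          (∀ (r s : R) (x : N), S (addR r s) x = addN (S r x) (S s x)) ∧
          (∀ (r s : R) (x : N), S (mulR r s) x = S r (S s x)) ∧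
          @Continuous (R × N) N (@instTopologicalSpaceProd R N tR ⊥) ⊥
            (fun p => S p.1 p.2) ∧
          @Continuous M N tM ⊥ φ ∧
          (∀ x y : M, φ (addM x y) = addN (φ x) (φ y)) ∧
          (∀ (r : R) (x : M), φ (T r x) = S r (φ x)) ∧
          φ x ≠ φ y) ↔
      (CompactSpace M ∧ T2Space M ∧ TotallyDisconnectedSpace M) := by
  constructor
  · -- forward: profinite ⇒ compact T2 totally disconnected
    rintro ⟨hcomp, hsep⟩
    haveI := hcomp
    have hts : TotallySeparatedSpace M := by
      refine ⟨fun x _ y _ hxy => ?_⟩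
      obtain ⟨N, addN, S, φ, _, _, _, _, _, _, _, hcφ, _, _, hφxy⟩ := hsep x y hxy
      letI : TopologicalSpace N := ⊥
      haveI : DiscreteTopology N := discreteTopology_bot N
      refine ⟨φ ⁻¹' {φ x}, φ ⁻¹' {φ x}ᶜ,
        hcφ.isOpen_preimage _ (isOpen_discrete _),
        hcφ.isOpen_preimage _ (isOpen_discrete _),
        rfl, ?_, ?_, ?_⟩
      · simp only [Set.mem_preimage, Set.mem_compl_iff, Set.mem_singleton_iff]
        exact fun h => hφxy h.symm
      · intro z _
        by_cases hz : φ z = φ x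
        · exact Or.inl hz
        · exact Or.inr hz
      · rw [Set.disjoint_left]
        intro z hz hz'
        exact hz' hz
    haveI := hts.t2Space
    exact ⟨hcomp, hts.t2Space, loc_compact_t2_tot_disc_iff_tot_sep.mpr hts⟩
  · -- backward
    rintro ⟨hcomp, ht2, htd⟩
    classical
    haveI := hcomp; haveI := ht2; haveI := htd
    haveI hts : TotallySeparatedSpace M := loc_compact_t2_tot_disc_iff_tot_sep.mp htd
    refine ⟨hcomp, fun x₀ y₀ hxy => ?_⟩
    obtain ⟨U, hU, hx₀, hy₀⟩ := exists_isClopen_of_totally_separated hxy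
    -- the syntactic congruence associated to U
    set rel : M → M → Prop := fun x y =>
      (x ∈ U ↔ y ∈ U) ∧ (∀ a, addM x a ∈ U ↔ addM y a ∈ U) ∧
      (∀ r, T r x ∈ U ↔ T r y ∈ U) ∧
      (∀ r a, addM (T r x) a ∈ U ↔ addM (T r y) a ∈ U) with hrel
    have hrefl : ∀ x, rel x x := fun x =>
      ⟨Iff.rfl, fun _ => Iff.rfl, fun _ => Iff.rfl, fun _ _ => Iff.rfl⟩
    have hsymm : ∀ x y, rel x y → rel y x := fun x y h =>
      ⟨h.1.symm, fun a => (h.2.1 a).symm, fun r => (h.2.2.1 r).symm,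
       fun r a => (h.2.2.2 r a).symm⟩
    have htrans : ∀ x y z, rel x y → rel y z → rel x z := fun x y z h h' =>
      ⟨h.1.trans h'.1, fun a => (h.2.1 a).trans (h'.2.1 a),
       fun r => (h.2.2.1 r).trans (h'.2.2.1 r),
       fun r a => (h.2.2.2 r a).trans (h'.2.2.2 r a)⟩
    -- congruence properties
    have haddc : ∀ x x' y, rel x x' → rel (addM x y) (addM x' y) := by
      intro x x' y h
      refine ⟨h.2.1 y, fun a => ?_, fun r => ?_, fun r a => ?_⟩
      · rw [haM, haM]; exact h.2.1 _
      · rw [hT1, hT1]; exact h.2.2.2 r (T r y)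
      · rw [hT1, hT1, haM, haM]; exact h.2.2.2 r (addM (T r y) a)
    have haddc2 : ∀ x x' y y', rel x x' → rel y y' →
        rel (addM x y) (addM x' y') := by
      intro x x' y y' h h'
      refine htrans _ (addM x' y) _ (haddc x x' y h) ?_
      rw [hcM x' y, hcM x' y']
      exact haddc y y' x' h'
    have hTc : ∀ s x x', rel x x' → rel (T s x) (T s x') := by
      intro s x x' h
      refine ⟨h.2.2.1 s, fun a => h.2.2.2 s a, fun r => ?_, fun r a => ?_⟩
      · rw [← hT3, ← hT3]; exact h.2.2.1 (mulR r s)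
      · rw [← hT3, ← hT3]; exact h.2.2.2 (mulR r s) a
    set sr : Setoid M := ⟨rel, ⟨hrefl, fun {a b} h => hsymm a b h,
      fun {a b c} h h' => htrans a b c h h'⟩⟩ with hsr
    set N := Quotient sr with hN
    set φ : M → N := Quotient.mk sr with hφ
    set addN : N → N → N := fun p q => Quotient.liftOn₂ p q
      (fun a b => φ (addM a b))
      (fun a b a' b' h h' => Quotient.sound (haddc2 a a' b b' h h')) with haddN
    set S : R → N → N := fun r q => Quotient.liftOn q (fun a => φ (T r a))
      (fun a a' h => Quotient.sound (hTc r a a' h)) with hS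
    -- finiteness via the box lemma
    obtain ⟨ι₂, hι₂, B₂, hB₂, hP₂⟩ := box_lemma M M
      ((fun p : M × M => addM p.2 p.1) ⁻¹' U)
      (hU.preimage (hcaM.comp continuous_swap))
    obtain ⟨ι₃, hι₃, B₃, hB₃, hP₃⟩ := box_lemma R M
      ((fun p : R × M => T p.1 p.2) ⁻¹' U) (hU.preimage hcT)
    obtain ⟨ι₄, hι₄, B₄, hB₄, hP₄⟩ := box_lemma (R × M) M
      ((fun p : (R × M) × M => addM (T p.1.1 p.2) p.1.2) ⁻¹' U)
      (hU.preimage (hcaM.comp ((hcT.comp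
        ((continuous_fst.fst).prodMk continuous_snd)).prodMk
        continuous_fst.snd)))
    haveI := hι₂; haveI := hι₃; haveI := hι₄
    set χ : M → Prop × (ι₂ → Prop) × (ι₃ → Prop) × (ι₄ → Prop) :=
      fun x => (x ∈ U, fun i => x ∈ B₂ i, fun i => x ∈ B₃ i,
        fun i => x ∈ B₄ i) with hχdef
    have hχ : ∀ x y, χ x = χ y → rel x y := by
      intro x y h
      have h1 : (x ∈ U) = (y ∈ U) := congrArg Prod.fst h
      have h2 : ∀ i, (x ∈ B₂ i) = (y ∈ B₂ i) :=
        fun i => congrFun (congrArg (fun v => v.2.1) h) i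
      have h3 : ∀ i, (x ∈ B₃ i) = (y ∈ B₃ i) :=
        fun i => congrFun (congrArg (fun v => v.2.2.1) h) i
      have h4 : ∀ i, (x ∈ B₄ i) = (y ∈ B₄ i) :=
        fun i => congrFun (congrArg (fun v => v.2.2.2) h) i
      exact ⟨iff_of_eq h1,
        fun a => hP₂ x y (fun i => iff_of_eq (h2 i)) a,
        fun r => hP₃ x y (fun i => iff_of_eq (h3 i)) r,
        fun r a => hP₄ x y (fun i => iff_of_eq (h4 i)) (r, a)⟩
    have hfin : Finite N := by
      refine Finite.of_surjective
        (fun v : Set.range χ => φ (Classical.choose v.2)) ?_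
      intro q
      obtain ⟨x, rfl⟩ := Quotient.exists_rep q
      refine ⟨⟨χ x, ⟨x, rfl⟩⟩, ?_⟩
      exact Quotient.sound (hχ _ _ (Classical.choose_spec (⟨x, rfl⟩ : ∃ a, χ a = χ x)))
    -- fibers of φ are open
    have hopen : ∀ x : M, IsOpen {y | rel y x} := by
      intro x
      rw [isOpen_iff_forall_mem_open]
      intro y hy
      refine ⟨(if y ∈ U then U else Uᶜ) ∩
        ((⋂ i, if y ∈ B₂ i then B₂ i else (B₂ i)ᶜ) ∩
         ((⋂ i, if y ∈ B₃ i then B₃ i else (B₃ i)ᶜ) ∩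
          (⋂ i, if y ∈ B₄ i then B₄ i else (B₄ i)ᶜ))), ?_, ?_, ?_⟩
      · intro z hz
        have e1 : z ∈ U ↔ y ∈ U := by
          have hh := hz.1
          by_cases h : y ∈ U
          · rw [if_pos h] at hh; exact iff_of_true hh h
          · rw [if_neg h] at hh; exact iff_of_false hh h
        have e2 : ∀ i, z ∈ B₂ i ↔ y ∈ B₂ i := by
          intro i
          have hh := Set.mem_iInter.mp hz.2.1 i
          by_cases h : y ∈ B₂ i
          · rw [if_pos h] at hh; exact iff_of_true hh h
          · rw [if_neg h] at hh; exact iff_of_false hh h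
        have e3 : ∀ i, z ∈ B₃ i ↔ y ∈ B₃ i := by
          intro i
          have hh := Set.mem_iInter.mp hz.2.2.1 i
          by_cases h : y ∈ B₃ i
          · rw [if_pos h] at hh; exact iff_of_true hh h
          · rw [if_neg h] at hh; exact iff_of_false hh h
        have e4 : ∀ i, z ∈ B₄ i ↔ y ∈ B₄ i := by
          intro i
          have hh := Set.mem_iInter.mp hz.2.2.2 i
          by_cases h : y ∈ B₄ i
          · rw [if_pos h] at hh; exact iff_of_true hh h
          · rw [if_neg h] at hh; exact iff_of_false hh h
        have hzy : rel z y :=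
          ⟨e1, fun a => hP₂ z y e2 a, fun r => hP₃ z y e3 r,
           fun r a => hP₄ z y e4 (r, a)⟩
        exact htrans z y x hzy hy
      · refine IsOpen.inter ?_ (IsOpen.inter ?_ (IsOpen.inter ?_ ?_))
        · split_ifs
          · exact hU.2
          · exact hU.1.isOpen_compl
        · refine isOpen_iInter_of_finite fun i => ?_
          split_ifs
          · exact (hB₂ i).2
          · exact (hB₂ i).1.isOpen_compl
        · refine isOpen_iInter_of_finite fun i => ?_
          split_ifs
          · exact (hB₃ i).2
          · exact (hB₃ i).1.isOpen_compl
        · refine isOpen_iInter_of_finite fun i => ?_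
          split_ifs
          · exact (hB₄ i).2
          · exact (hB₄ i).1.isOpen_compl
      · refine ⟨?_, Set.mem_iInter.mpr fun i => ?_, Set.mem_iInter.mpr fun i => ?_,
          Set.mem_iInter.mpr fun i => ?_⟩ <;> · split_ifs with h
                                                · exact h
                                                · exact h
    have hfiber : ∀ s : Set N, IsOpen (φ ⁻¹' s) := by
      intro s
      rw [isOpen_iff_forall_mem_open]
      intro x hx
      refine ⟨{y | rel y x}, fun z hz => ?_, hopen x, hrefl x⟩
      have : φ z = φ x := Quotient.sound hz
      show φ z ∈ s
      rw [this]; exact hx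
    letI tN : TopologicalSpace N := ⊥
    haveI : DiscreteTopology N := discreteTopology_bot N
    refine ⟨N, addN, S, φ, hfin, ?_, ?_, ?_, ?_, ?_, ?_, ?_, ?_, ?_, ?_⟩
    · intro a b c
      obtain ⟨x, rfl⟩ := Quotient.exists_rep a
      obtain ⟨y, rfl⟩ := Quotient.exists_rep b
      obtain ⟨z, rfl⟩ := Quotient.exists_rep c
      exact congrArg φ (haM x y z)
    · intro a b
      obtain ⟨x, rfl⟩ := Quotient.exists_rep a
      obtain ⟨y, rfl⟩ := Quotient.exists_rep b
      exact congrArg φ (hcM x y)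
    · intro r a b
      obtain ⟨x, rfl⟩ := Quotient.exists_rep a
      obtain ⟨y, rfl⟩ := Quotient.exists_rep b
      exact congrArg φ (hT1 r x y)
    · intro r s a
      obtain ⟨x, rfl⟩ := Quotient.exists_rep a
      exact congrArg φ (hT2 r s x)
    · intro r s a
      obtain ⟨x, rfl⟩ := Quotient.exists_rep a
      exact congrArg φ (hT3 r s x)
    · -- continuity of S
      rw [continuous_def]
      intro s _
      rw [isOpen_iff_forall_mem_open]
      rintro ⟨r, q⟩ hmem
      obtain ⟨x, rfl⟩ := Quotient.exists_rep q
      refine ⟨((fun r' => T r' x) ⁻¹' (φ ⁻¹' s)) ×ˢ {φ x}, ?_, ?_, ?_⟩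
      · rintro ⟨r', q'⟩ ⟨hr', hq'⟩
        have hq'' : q' = φ x := hq'
        show S r' q' ∈ s
        rw [hq'']
        exact hr'
      · exact ((hfiber s).preimage
          (hcT.comp (continuous_id.prodMk continuous_const))).prod
          (isOpen_discrete _)
      · exact ⟨hmem, rfl⟩
    · -- continuity of φ
      rw [continuous_def]
      intro s _
      exact hfiber s
    · intro x y; rfl
    · intro r x; rfl
    · intro h
      have : rel x₀ y₀ := Quotient.exact h
      exact hy₀ (this.1.mp hx₀)
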